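/- Additivity of the complexity measure: for every ℓ ≥ 1 and every sequence a = [t₁ ⋯ t_k], G_ℓ(a) = Σ_{j=1}^{k} G_ℓ(t_j), where G_ℓ(x) is the length of a longest ⊐_ℓ-descending chain starting from x. -/

import Mathlib

/-- First-order terms over a signature `F` and variables `V` (variadic). -/
inductive Tm (F V : Type) : Type
  | var : V → Tm F V
  | app : F → List (Tm F V) → Tm F V

/-- Proper subterm relation: `PSub s t` means `s` is a proper subterm of `t`. -/
inductive PSub {F V : Type} : Tm F V → Tm F V → Prop
  | arg {f : F} {ts : List (Tm F V)} {t : Tm F V} : t ∈ ts → PSub t (Tm.app f ts)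
  | trans {f : F} {ts : List (Tm F V)} {s t : Tm F V} : t ∈ ts → PSub s t → PSub s (Tm.app f ts)

/-- Terms or sequences of terms. -/
abbrev TS (F V : Type) := Tm F V ⊕ List (Tm F V)

/-- The order `⊐_ℓ` on terms and sequences of terms, given a precedence `prec`. -/
inductive Spl {F V : Type} (prec : F → F → Prop) (ℓ : ℕ) : TS F V → TS F V → Prop
  | st {f g : F} {ss ts : List (Tm F V)} :
      prec f g → (∀ t ∈ ts, PSub t (Tm.app f ss)) → ts.length ≤ ℓ →
      Spl prec ℓ (Sum.inl (Tm.app f ss)) (Sum.inl (Tm.app g ts))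
  | sb {f : F} {ss ts : List (Tm F V)} :
      (∀ t ∈ ts, Spl prec ℓ (Sum.inl (Tm.app f ss)) (Sum.inl t)) → ts.length ≤ ℓ →
      Spl prec ℓ (Sum.inl (Tm.app f ss)) (Sum.inr ts)
  | ab {ss ts : List (Tm F V)} (bs : List (List (Tm F V)))
      (i : ℕ) (s : Tm F V) (b : List (Tm F V)) :
      bs.length = ss.length →
      bs.flatten.Perm ts →
      (∀ (j : ℕ) s' b', ss[j]? = some s' → bs[j]? = some b' →
        b' ≠ [s'] → Spl prec ℓ (Sum.inl s') (Sum.inr b')) →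
      ss[i]? = some s → bs[i]? = some b →
      Spl prec ℓ (Sum.inl s) (Sum.inr b) →
      Spl prec ℓ (Sum.inr ss) (Sum.inr ts)

/-- `ChainLen R a n`: there is an `R`-descending chain of length `n` starting at `a`. -/
def ChainLen {α : Type*} (R : α → α → Prop) (a : α) (n : ℕ) : Prop :=
  ∃ f : ℕ → α, f 0 = a ∧ ∀ i < n, R (f i) (f (i + 1))

/-- `IsMaxChainLen R N`: `N a` is the maximal length of an `R`-descending chain from `a`. -/
def IsMaxChainLen {α : Type*} (R : α → α → Prop) (N : α → ℕ) : Prop :=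
  ∀ a, ChainLen R a (N a) ∧ ∀ n, ChainLen R a n → n ≤ N a


section Aux

variable {α : Type}

theorem getTri₁ (p m q : List α) {j : ℕ} (h : j < p.length) : (p ++ m ++ q)[j]? = p[j]? := by
  rw [List.getElem?_append, List.getElem?_append]
  simp [h]
  omega

theorem getTri₂ (p m q : List α) {j : ℕ} (h : p.length ≤ j) (h2 : j - p.length < m.length) :
    (p ++ m ++ q)[j]? = m[j - p.length]? := by
  rw [List.getElem?_append, List.getElem?_append]
  rw [if_pos (by simp; omega), if_neg (by omega)]

theorem getTri₃ (p m q : List α) {j : ℕ} (h : p.length + m.length ≤ j) :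
    (p ++ m ++ q)[j]? = q[j - p.length - m.length]? := by
  rw [List.getElem?_append]
  rw [if_neg (by simp; omega)]
  congr 1
  simp; omega

/-- Chains can be extended by one step at the front. -/
theorem chain_succ {R : α → α → Prop} {a b : α} {n : ℕ} (h : R a b) (hc : ChainLen R b n) :
    ChainLen R a (n + 1) := by
  obtain ⟨f, hf0, hf⟩ := hc
  refine ⟨fun i => if i = 0 then a else f (i - 1), rfl, ?_⟩
  intro i hi
  cases i with
  | zero => simpa [hf0] using h
  | succ j => simpa using hf j (by omega)

theorem chain_shift {R : α → α → Prop} {a : α} {n : ℕ} (hc : ChainLen R a (n + 1)) :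
    ∃ b, R a b ∧ ChainLen R b n := by
  obtain ⟨f, hf0, hf⟩ := hc
  exact ⟨f 1, hf0 ▸ hf 0 (by omega), ⟨fun i => f (i + 1), rfl, fun i hi => hf (i + 1) (by omega)⟩⟩

theorem chain_map {R : α → α → Prop} (H : α → α) (hH : ∀ x y, R x y → R (H x) (H y))
    {a : α} {n : ℕ} (hc : ChainLen R a n) : ChainLen R (H a) n := by
  obtain ⟨f, hf0, hf⟩ := hc
  exact ⟨fun i => H (f i), by simp [hf0], fun i hi => hH _ _ (hf i hi)⟩

theorem chain_le {R : α → α → Prop} (M : α → ℕ) (hM : ∀ x y, R x y → M y < M x) :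
    ∀ (n : ℕ) (a : α), ChainLen R a n → n ≤ M a := by
  intro n
  induction n with
  | zero => intro a _; omega
  | succ k ih =>
    intro a hc
    obtain ⟨b, hab, hcb⟩ := chain_shift hc
    have h1 := ih b hcb
    have h2 := hM _ _ hab
    omega

theorem sum_le_idx : ∀ (u v : List ℕ), u.length = v.length →
    (∀ j (h1 : j < u.length) (h2 : j < v.length), u[j] ≤ v[j]) → u.sum ≤ v.sum := by
  intro u
  induction u with
  | nil => intro v _ _; simp
  | cons a u ih =>
    intro v hlen hle
    cases v with
    | nil => simp at hlen
    | cons b v =>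
      simp only [List.sum_cons]
      have h0 := hle 0 (by simp) (by simp)
      simp only [List.getElem_cons_zero] at h0
      have ht := ih v (by simpa using hlen)
        (fun j h1 h2 => by exact hle (j + 1) (by simp; omega) (by simp; omega))
      omega

theorem sum_lt_idx : ∀ (u v : List ℕ), u.length = v.length →
    (∀ j (h1 : j < u.length) (h2 : j < v.length), u[j] ≤ v[j]) →
    ∀ (i : ℕ) (h1 : i < u.length) (h2 : i < v.length), u[i] < v[i] → u.sum < v.sum := by
  intro u
  induction u with
  | nil => intro v _ _ i h1; simp at h1
  | cons a u ih =>
    intro v hlen hle i h1 h2 hlt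
    cases v with
    | nil => simp at hlen
    | cons b v =>
      simp only [List.sum_cons]
      cases i with
      | zero =>
        simp only [List.getElem_cons_zero] at hlt
        have ht := sum_le_idx u v (by simpa using hlen)
          (fun j hj1 hj2 => by exact hle (j + 1) (by simp; omega) (by simp; omega))
        omega
      | succ i =>
        have h0 := hle 0 (by simp) (by simp)
        simp only [List.getElem_cons_zero] at h0
        simp only [List.getElem_cons_succ] at hlt
        have ht := ih v (by simpa using hlen)
          (fun j hj1 hj2 => by exact hle (j + 1) (by simp; omega) (by simp; omega))
          i (by simpa using h1) (by simp at h2 ⊢; omega) hlt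
        omega

end Aux

section SplAux

variable {F V : Type} {prec : F → F → Prop} {ℓ : ℕ}

/-- View a term-or-sequence as a list of terms. -/
def toL : TS F V → List (Tm F V) := Sum.elim (fun s => [s]) id

theorem flatten_map_singleton (l : List (Tm F V)) :
    (l.map (fun u => [u])).flatten = l := by
  induction l with
  | nil => rfl
  | cons a l ih => simp [ih]

/-- Congruence: a `Spl`-step between sequences can be performed inside a list context. -/
theorem Spl.cong (p q : List (Tm F V)) {ss tt : List (Tm F V)}
    (h : Spl prec ℓ (Sum.inr ss) (Sum.inr tt)) :
    Spl prec ℓ (Sum.inr (p ++ ss ++ q)) (Sum.inr (p ++ tt ++ q)) := by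
  cases h with
  | ab bs i s b hlen hperm hcond hsi hbi hstr =>
    have hi : i < ss.length := (List.getElem?_eq_some_iff.1 hsi).1
    have hbii : i < bs.length := (List.getElem?_eq_some_iff.1 hbi).1
    refine Spl.ab (p.map (fun u => [u]) ++ bs ++ q.map (fun u => [u]))
      (p.length + i) s b ?_ ?_ ?_ ?_ ?_ hstr
    · simp [hlen]
    · simp only [List.flatten_append, flatten_map_singleton]
      exact (hperm.append_left p).append_right q
    · intro j s' b' h1 h2 hne
      by_cases hj : j < p.length
      · exfalso
        rw [getTri₁ _ _ _ hj] at h1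
        rw [getTri₁ _ _ _ (by simpa using hj)] at h2
        rw [List.getElem?_map, h1] at h2
        simp at h2
        exact hne h2.symm
      · by_cases hj2 : j - p.length < ss.length
        · rw [getTri₂ _ _ _ (by omega) hj2] at h1
          rw [getTri₂ _ _ _ (by simp; omega) (by simp; omega)] at h2
          simp only [List.length_map] at h2
          exact hcond _ _ _ h1 (by rw [← h2]) hne
        · exfalso
          rw [getTri₃ _ _ _ (by omega)] at h1
          rw [getTri₃ _ _ _ (by simp [hlen]; omega)] at h2
          simp only [List.length_map, hlen] at h2
          rw [List.getElem?_map, h1] at h2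
          simp at h2
          exact hne h2.symm
    · rw [getTri₂ _ _ _ (by omega) (by simpa using hi)]
      simpa using hsi
    · rw [getTri₂ _ _ _ (by simp) (by simp; omega)]
      simp only [List.length_map]
      simpa using hbi

/-- A term dominating a sequence gives a step between singleton sequence and that sequence. -/
theorem Spl.single {s : Tm F V} {b : List (Tm F V)}
    (h : Spl prec ℓ (Sum.inl s) (Sum.inr b)) :
    Spl prec ℓ (Sum.inr [s]) (Sum.inr b) := by
  refine Spl.ab [b] 0 s b (by simp) (by simp) ?_ (by simp) (by simp) h
  intro j s' b' h1 h2 hne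
  have hj : j < 1 := by simpa using (List.getElem?_eq_some_iff.1 h1).1
  interval_cases j
  simp only [List.getElem?_cons_zero, Option.some.injEq] at h1 h2
  subst h1; subst h2
  exact h

/-- Key embedding lemma: any `Spl` step embeds into a sequence context via `toL`. -/
theorem Spl.emb (hℓ : 1 ≤ ℓ) (p q : List (Tm F V)) {x y : TS F V} (h : Spl prec ℓ x y) :
    Spl prec ℓ (Sum.inr (p ++ toL x ++ q)) (Sum.inr (p ++ toL y ++ q)) := by
  cases h with
  | @st f g ss ts hp hsub hlen =>
    have h1 : Spl prec ℓ (Sum.inl (Tm.app f ss)) (Sum.inr [Tm.app g ts]) := by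
      refine Spl.sb ?_ (by simpa using hℓ)
      intro t ht
      simp only [List.mem_singleton] at ht
      subst ht
      exact Spl.st hp hsub hlen
    exact Spl.cong p q (Spl.single h1)
  | sb hs hlen => exact Spl.cong p q (Spl.single (Spl.sb hs hlen))
  | ab bs i s b hlen hperm hcond hsi hbi hstr =>
    exact Spl.cong p q (Spl.ab bs i s b hlen hperm hcond hsi hbi hstr)

variable (N : TS F V → ℕ) (hN : IsMaxChainLen (Spl prec ℓ) N)

include hN

theorem N_lt {a b : TS F V} (h : Spl prec ℓ a b) : N b < N a :=
  (hN a).2 _ (chain_succ h (hN b).1)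

/-- Lower bound: the sum of the measures is at most the measure of the sequence. -/
theorem ge_aux (hℓ : 1 ≤ ℓ) : ∀ ts : List (Tm F V),
    (ts.map (fun t => N (Sum.inl t))).sum ≤ N (Sum.inr ts) := by
  intro ts
  induction ts with
  | nil => simp
  | cons t ts ih =>
    have key2 : N (Sum.inl t) + N (Sum.inr ts) ≤ N (Sum.inr (t :: ts)) := by
      obtain ⟨f, hf0, hf⟩ := (hN (Sum.inl t)).1
      obtain ⟨g, hg0, hg⟩ := (hN (Sum.inr ts)).1
      set n := N (Sum.inl t) with hn
      set m := N (Sum.inr ts) with hm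
      apply (hN (Sum.inr (t :: ts))).2
      refine ⟨fun i => if i < n then Sum.inr ([] ++ toL (f i) ++ ts)
                       else Sum.inr (toL (f n) ++ toL (g (i - n)) ++ []), ?_, ?_⟩
      · by_cases h0 : 0 < n
        · simp [h0, hf0, toL]
        · have hn0 : n = 0 := by omega
          beta_reduce
          rw [if_neg h0, hn0]
          simp [hf0, hg0, toL]
      · intro i hi
        by_cases h1 : i < n
        · by_cases h2 : i + 1 < n
          · simpa [h1, h2] using Spl.emb hℓ [] ts (hf i h1)
          · have hin : i + 1 = n := by omega
            have hk := Spl.emb hℓ [] ts (hf i h1)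
            beta_reduce
            rw [if_pos h1, if_neg (by omega)]
            have e : (Sum.inr (toL (f n) ++ toL (g (i + 1 - n)) ++ []) : TS F V)
                = Sum.inr ([] ++ toL (f (i + 1)) ++ ts) := by
              rw [hin]
              simp [hg0, toL]
            rw [e]
            exact hk
        · beta_reduce
          rw [if_neg h1, if_neg (by omega)]
          have e : i + 1 - n = (i - n) + 1 := by omega
          rw [e]
          exact Spl.emb hℓ (toL (f n)) [] (hg (i - n) (by omega))
    calc ((t :: ts).map (fun t => N (Sum.inl t))).sum
        = N (Sum.inl t) + (ts.map (fun t => N (Sum.inl t))).sum := by simp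
      _ ≤ N (Sum.inl t) + N (Sum.inr ts) := Nat.add_le_add_left ih _
      _ ≤ N (Sum.inr (t :: ts)) := key2

/-- The measure `M` is strictly decreasing along `Spl`. -/
theorem dec_aux (hℓ : 1 ≤ ℓ) {x y : TS F V} (h : Spl prec ℓ x y) :
    Sum.elim (fun s => N (Sum.inl s)) (fun l => (l.map (fun t => N (Sum.inl t))).sum) y <
    Sum.elim (fun s => N (Sum.inl s)) (fun l => (l.map (fun t => N (Sum.inl t))).sum) x := by
  cases h with
  | st hp hsub hlen => simpa using N_lt N hN (Spl.st hp hsub hlen)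
  | sb hs hlen =>
    simp only [Sum.elim_inl, Sum.elim_inr]
    exact lt_of_le_of_lt (ge_aux N hN hℓ _) (N_lt N hN (Spl.sb hs hlen))
  | @ab ss tt bs i s b hlen hperm hcond hsi hbi hstr =>
    simp only [Sum.elim_inr]
    set G : Tm F V → ℕ := fun t => N (Sum.inl t) with hG
    have e1 : (tt.map G).sum = (bs.flatten.map G).sum := ((hperm.map G).sum_eq).symm
    have e2 : (bs.flatten.map G).sum = (bs.map (fun l => (l.map G).sum)).sum := by
      rw [List.map_flatten, List.sum_flatten, List.map_map]
      rfl
    rw [e1, e2]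
    obtain ⟨hi1, hsv⟩ := List.getElem?_eq_some_iff.1 hsi
    obtain ⟨hi2, hbv⟩ := List.getElem?_eq_some_iff.1 hbi
    refine sum_lt_idx _ _ (by simp [hlen]) ?_ i (by simpa using hi2) (by simpa using hi1) ?_
    · intro j h1 h2
      simp only [List.length_map] at h1 h2
      rw [List.getElem_map, List.getElem_map]
      by_cases hb : bs[j] = [ss[j]]
      · simp [hb]
      · have hc := hcond j ss[j] bs[j] (List.getElem?_eq_getElem h2)
          (List.getElem?_eq_getElem h1) hb
        exact le_of_lt (lt_of_le_of_lt (ge_aux N hN hℓ _) (N_lt N hN hc))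
    · rw [List.getElem_map, List.getElem_map, hsv, hbv]
      exact lt_of_le_of_lt (ge_aux N hN hℓ _) (N_lt N hN hstr)

end SplAux


/-- additivity of the complexity measure `G_ℓ` on sequences. -/
theorem G_additive {F V : Type} (prec : F → F → Prop) (ℓ : ℕ) (hℓ : 1 ≤ ℓ)
    (N : TS F V → ℕ) (hN : IsMaxChainLen (Spl prec ℓ) N)
    (ts : List (Tm F V)) :
    N (Sum.inr ts) = (ts.map (fun t => N (Sum.inl t))).sum := by
  apply le_antisymm
  · have h := chain_le
      (Sum.elim (fun s => N (Sum.inl s)) (fun l => (l.map (fun t => N (Sum.inl t))).sum))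
      (fun x y h => dec_aux N hN hℓ h) _ _ ((hN (Sum.inr ts)).1)
    simpa using h
  · exact ge_aux N hN hℓ ts
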